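/- Let a : Fin n → ℤ be totally positive normalized, let Δ = Δ_0 ∩ Δ_a, and let c, d : Fin n → ℤ be such that Δ ⊆ Δ_c and Δ ⊆ Δ_d. If for every maximal R-order D of Mₙ(K) one has Δ_c ∩ Δ_d ⊆ D if and only if Δ ⊆ D, then either (Δ_c = Δ_0 and Δ_d = Δ_a) or (Δ_c = Δ_a and Δ_d = Δ_0). (Split case, B = K, of the Lemma: if Δ_[c], Δ_[d] ∈ S₀(Δ) satisfy S₀(Δ) = S₀(Δ_[c] ∩ Δ_[d]), then ([c],[d]) = (0,[b]) or ([d],[c]) = (0,[b]).) -/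

import Mathlib

variable (R K : Type*) [CommRing R] [IsDomain R] [IsDiscreteValuationRing R]
  [Field K] [Algebra R K] [IsFractionRing R K]

/-- The order `Δ_a` in `Mₙ(K)`: matrices `X` with `π^(a j - a i) * X i j ∈ R` for all `i, j`. -/
def Delta (π : R) {n : ℕ} (a : Fin n → ℤ) : Set (Matrix (Fin n) (Fin n) K) :=
  {X | ∀ i j, (algebraMap R K π) ^ (a j - a i) * X i j ∈ (algebraMap R K).range}

/-- An `R`-order in `Mₙ(K)`: an `R`-subalgebra, finitely generated as an `R`-module,
spanning `Mₙ(K)` over `K`. -/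
def IsOrder {n : ℕ} (D : Subalgebra R (Matrix (Fin n) (Fin n) K)) : Prop :=
  (Subalgebra.toSubmodule D).FG ∧
    Submodule.span K (D : Set (Matrix (Fin n) (Fin n) K)) = ⊤

/-- A maximal `R`-order in `Mₙ(K)`. -/
def IsMaximalOrder {n : ℕ} (D : Subalgebra R (Matrix (Fin n) (Fin n) K)) : Prop :=
  IsOrder R K D ∧ ∀ D' : Subalgebra R (Matrix (Fin n) (Fin n) K),
    IsOrder R K D' → D ≤ D' → D' = D

set_option linter.unusedSectionVars false
set_option linter.unusedTactic false

section Scalar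

variable {R K}
variable (π : R) (hπ : Irreducible π)
include hπ

lemma st5_pi_ne_zero : algebraMap R K π ≠ 0 := by
  rw [map_ne_zero_iff _ (IsFractionRing.injective R K)]
  exact hπ.ne_zero

lemma st5_zpow_mem {t : ℤ} (ht : 0 ≤ t) :
    (algebraMap R K π) ^ t ∈ (algebraMap R K).range := by
  lift t to ℕ using ht
  rw [zpow_natCast, ← map_pow]
  exact ⟨π ^ t, rfl⟩

lemma st5_zpow_mem_iff {t : ℤ} :
    (algebraMap R K π) ^ t ∈ (algebraMap R K).range ↔ 0 ≤ t := by
  refine ⟨fun hmem => ?_, st5_zpow_mem π hπ⟩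
  by_contra hlt
  push_neg at hlt
  obtain ⟨r, hr⟩ := hmem
  obtain ⟨k, hk⟩ : ∃ k : ℕ, (k : ℤ) = -t := ⟨(-t).toNat, Int.toNat_of_nonneg (by omega)⟩
  have h1 : algebraMap R K (r * π ^ k) = 1 := by
    rw [map_mul, map_pow, hr, ← zpow_natCast (algebraMap R K π) k, hk,
      ← zpow_add₀ (st5_pi_ne_zero π hπ), add_neg_cancel, zpow_zero]
  have h2 : r * π ^ k = 1 := by
    apply IsFractionRing.injective R K
    rw [h1, map_one]
  obtain ⟨k', rfl⟩ : ∃ k', k = k' + 1 := ⟨k - 1, by omega⟩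
  exact hπ.not_isUnit (IsUnit.of_mul_eq_one (a := π) (r * π ^ k') (by
    rw [← h2, pow_succ]; ring))

lemma st5_mem_mono {m m' : ℤ} (hmm : m ≤ m') {x : K}
    (hx : (algebraMap R K π) ^ m * x ∈ (algebraMap R K).range) :
    (algebraMap R K π) ^ m' * x ∈ (algebraMap R K).range := by
  have : (algebraMap R K π) ^ m' * x
      = (algebraMap R K π) ^ (m' - m) * ((algebraMap R K π) ^ m * x) := by
    rw [← mul_assoc, ← zpow_add₀ (st5_pi_ne_zero π hπ), sub_add_cancel]
  rw [this]
  exact mul_mem (st5_zpow_mem π hπ (t := m' - m) (by omega)) hx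

lemma st5_key_iff {k m : ℤ} :
    (algebraMap R K π) ^ k * (algebraMap R K π) ^ (-m) ∈ (algebraMap R K).range ↔ m ≤ k := by
  rw [← zpow_add₀ (st5_pi_ne_zero π hπ), st5_zpow_mem_iff π hπ]
  omega

end Scalar

section SetLemmas

variable {R K}
variable (π : R) (hπ : Irreducible π) {n : ℕ}

lemma st5_mem_Delta_iff {a : Fin n → ℤ} {X : Matrix (Fin n) (Fin n) K} :
    X ∈ Delta R K π a ↔
      ∀ i j, (algebraMap R K π) ^ (a j - a i) * X i j ∈ (algebraMap R K).range :=
  Iff.rfl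

lemma st5_stdBasis_mem {a : Fin n → ℤ} {i j : Fin n} {x : K}
    (h : (algebraMap R K π) ^ (a j - a i) * x ∈ (algebraMap R K).range) :
    Matrix.single i j x ∈ Delta R K π a := by
  intro i' j'
  by_cases hij : i = i' ∧ j = j'
  · obtain ⟨rfl, rfl⟩ := hij
    rwa [Matrix.single_apply_same]
  · rw [Matrix.single_apply_of_ne _ _ _ _ _ hij, mul_zero]
    exact zero_mem _

include hπ

lemma st5_subset_pair_iff (e f g : Fin n → ℤ) :
    Delta R K π e ∩ Delta R K π f ⊆ Delta R K π g ↔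
      ∀ i j, min (e j - e i) (f j - f i) ≤ g j - g i := by
  constructor
  · intro H i j
    have hX : Matrix.single i j
        ((algebraMap R K π) ^ (-(min (e j - e i) (f j - f i)))) ∈
        Delta R K π e ∩ Delta R K π f :=
      ⟨st5_stdBasis_mem π ((st5_key_iff π hπ).mpr (min_le_left _ _)),
       st5_stdBasis_mem π ((st5_key_iff π hπ).mpr (min_le_right _ _))⟩
    have := H hX i j
    rw [Matrix.single_apply_same] at this
    exact (st5_key_iff π hπ).mp this
  · rintro H X ⟨hXe, hXf⟩ i j
    rcases le_total (e j - e i) (f j - f i) with h' | h'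
    · exact st5_mem_mono π hπ ((min_eq_left h') ▸ H i j) (hXe i j)
    · exact st5_mem_mono π hπ ((min_eq_right h') ▸ H i j) (hXf i j)

lemma st5_subset_iff (e g : Fin n → ℤ) :
    Delta R K π e ⊆ Delta R K π g ↔ ∀ i j, e j - e i ≤ g j - g i := by
  rw [← Set.inter_self (Delta R K π e), st5_subset_pair_iff π hπ]
  simp

lemma st5_Delta_eq_of {e f : Fin n → ℤ} (h : ∀ i j, e j - e i = f j - f i) :
    Delta R K π e = Delta R K π f :=
  Set.Subset.antisymm
    ((st5_subset_iff π hπ e f).mpr fun i j => le_of_eq (h i j))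
    ((st5_subset_iff π hπ f e).mpr fun i j => le_of_eq (h i j).symm)

end SetLemmas
section Alg

variable (π : R) (hπ : Irreducible π) {n : ℕ} (a : Fin n → ℤ)

/-- The subalgebra with carrier `Delta`. -/
def DeltaAlg : Subalgebra R (Matrix (Fin n) (Fin n) K) where
  carrier := Delta R K π a
  mul_mem' := by
    intro X Y hX hY i j
    rw [Matrix.mul_apply, Finset.mul_sum]
    refine sum_mem fun k _ => ?_
    have hsplit : (algebraMap R K π) ^ (a j - a i) * (X i k * Y k j)
        = ((algebraMap R K π) ^ (a k - a i) * X i k)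
          * ((algebraMap R K π) ^ (a j - a k) * Y k j) := by
      rw [mul_mul_mul_comm, ← zpow_add₀ (st5_pi_ne_zero π hπ)]
      congr 2
      ring
    rw [hsplit]
    exact mul_mem (hX i k) (hY k j)
  one_mem' := by
    intro i j
    rcases eq_or_ne i j with rfl | hij
    · rw [Matrix.one_apply_eq, sub_self, zpow_zero, one_mul]
      exact one_mem _
    · rw [Matrix.one_apply_ne hij, mul_zero]
      exact zero_mem _
  add_mem' := by
    intro X Y hX hY i j
    rw [Matrix.add_apply, mul_add]
    exact add_mem (hX i j) (hY i j)
  zero_mem' := by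
    intro i j
    rw [Matrix.zero_apply, mul_zero]
    exact zero_mem _
  algebraMap_mem' := by
    intro r i j
    rw [Matrix.algebraMap_matrix_apply]
    rcases eq_or_ne i j with rfl | hij
    · rw [if_pos rfl, sub_self, zpow_zero, one_mul]
      exact ⟨r, rfl⟩
    · rw [if_neg hij, mul_zero]
      exact zero_mem _

lemma st5_mem_DeltaAlg {X : Matrix (Fin n) (Fin n) K} :
    X ∈ DeltaAlg R K π hπ a ↔ X ∈ Delta R K π a := Iff.rfl

lemma st5_coe_DeltaAlg :
    (DeltaAlg R K π hπ a : Set (Matrix (Fin n) (Fin n) K)) = Delta R K π a := rfl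

include hπ

lemma st5_gen_mem (i j : Fin n) :
    Matrix.single i j ((algebraMap R K π) ^ (a i - a j)) ∈ Delta R K π a := by
  apply st5_stdBasis_mem π
  rw [show a i - a j = -(a j - a i) by ring]
  exact (st5_key_iff π hπ).mpr le_rfl

lemma st5_fg : (Subalgebra.toSubmodule (DeltaAlg R K π hπ a)).FG := by
  classical
  refine ⟨(Finset.univ : Finset (Fin n × Fin n)).image
    (fun ij => Matrix.single ij.1 ij.2 ((algebraMap R K π) ^ (a ij.1 - a ij.2))), ?_⟩
  apply le_antisymm
  · rw [Submodule.span_le]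
    intro x hx
    simp only [Finset.coe_image, Finset.coe_univ, Set.image_univ, Set.mem_range] at hx
    obtain ⟨ij, rfl⟩ := hx
    exact st5_gen_mem R K π hπ a ij.1 ij.2
  · intro X hX
    have hX' : X ∈ Delta R K π a := hX
    rw [Matrix.matrix_eq_sum_single X]
    refine Submodule.sum_mem _ fun i _ => Submodule.sum_mem _ fun j _ => ?_
    obtain ⟨r, hr⟩ := hX' i j
    have heq : Matrix.single i j (X i j)
        = r • Matrix.single i j ((algebraMap R K π) ^ (a i - a j)) := by
      rw [Matrix.smul_single]
      congr 1
      rw [Algebra.smul_def, hr, mul_comm, ← mul_assoc, ← zpow_add₀ (st5_pi_ne_zero π hπ),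
        show a i - a j + (a j - a i) = 0 by ring, zpow_zero, one_mul]
    rw [heq]
    refine Submodule.smul_mem _ _ (Submodule.subset_span ?_)
    simp only [Finset.coe_image, Finset.coe_univ, Set.image_univ, Set.mem_range]
    exact ⟨(i, j), rfl⟩

lemma st5_span : Submodule.span K (Delta R K π a) = ⊤ := by
  rw [eq_top_iff]
  intro X _
  rw [Matrix.matrix_eq_sum_single X]
  refine Submodule.sum_mem _ fun i _ => Submodule.sum_mem _ fun j _ => ?_
  have heq : Matrix.single i j (X i j)
      = (X i j * (algebraMap R K π) ^ (a j - a i)) •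
          Matrix.single i j ((algebraMap R K π) ^ (a i - a j)) := by
    rw [Matrix.smul_single]
    congr 1
    rw [smul_eq_mul, mul_assoc, ← zpow_add₀ (st5_pi_ne_zero π hπ),
      show a j - a i + (a i - a j) = 0 by ring, zpow_zero, mul_one]
  rw [heq]
  exact Submodule.smul_mem _ _ (Submodule.subset_span (st5_gen_mem R K π hπ a i j))

lemma st5_isOrder : IsOrder R K (DeltaAlg R K π hπ a) :=
  ⟨st5_fg R K π hπ a, by rw [st5_coe_DeltaAlg]; exact st5_span R K π hπ a⟩

end Alg
section Max

variable {R K}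
variable (π : R) (hπ : Irreducible π) {n : ℕ} (a : Fin n → ℤ)

lemma st5_triple_mul {k i j l : Fin n} (x y : K) (X : Matrix (Fin n) (Fin n) K) :
    Matrix.single k i x * X * Matrix.single j l y
      = Matrix.single k l (x * X i j * y) := by
  ext a b
  rcases eq_or_ne a k with rfl | hak
  · rcases eq_or_ne b l with rfl | hbl
    · rw [mul_assoc, Matrix.single_mul_apply_same,
        Matrix.mul_single_apply_same, Matrix.single_apply_same, mul_assoc]
    · rw [mul_assoc, Matrix.single_mul_apply_same,
        Matrix.mul_single_apply_of_ne (hbj := hbl), mul_zero,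
        Matrix.single_apply_of_ne]
      tauto
  · rw [Matrix.mul_assoc, Matrix.single_mul_apply_of_ne (h := hak),
      Matrix.single_apply_of_ne]
    tauto

include hπ

lemma st5_maximal (hn : 0 < n) : IsMaximalOrder R K (DeltaAlg R K π hπ a) := by
  refine ⟨st5_isOrder R K π hπ a, fun D' hD' hle => le_antisymm ?_ hle⟩
  intro X hX
  show X ∈ Delta R K π a
  intro i j
  set i0 : Fin n := ⟨0, hn⟩ with hi0
  have hE : ∀ k l, Matrix.single k l ((algebraMap R K π) ^ (a k - a l)) ∈ D' :=
    fun k l => hle (st5_gen_mem R K π hπ a k l)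
  -- the scalar we must show is in the image of R
  set s : K := (algebraMap R K π) ^ (a j - a i) * X i j with hs
  have hM : Matrix.single i0 i0 s ∈ D' := by
    have hmem := mul_mem (mul_mem (hE i0 i) hX) (hE j i0)
    have hsc : (algebraMap R K π) ^ (a i0 - a i) * X i j * (algebraMap R K π) ^ (a j - a i0)
        = s := by
      rw [hs, mul_right_comm, ← zpow_add₀ (st5_pi_ne_zero π hπ),
        show a i0 - a i + (a j - a i0) = a j - a i by ring, mul_comm _ (X i j), mul_comm]
    rwa [st5_triple_mul, hsc] at hmem
  -- the subalgebra of scalars x with x • E₀₀ ∈ D'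
  have hone : Matrix.single i0 i0 (1 : K) ∈ D' := by
    have := hE i0 i0
    rwa [sub_self, zpow_zero] at this
  let Λ : Subalgebra R K :=
    { carrier := {x : K | Matrix.single i0 i0 x ∈ D'}
      mul_mem' := fun {x y} hx hy => by
        have hx' : Matrix.single i0 i0 x ∈ D' := hx
        have hy' : Matrix.single i0 i0 y ∈ D' := hy
        show Matrix.single i0 i0 (x * y) ∈ D'
        rw [← Matrix.single_mul_single_same (j := i0)]
        exact mul_mem hx' hy'
      one_mem' := hone
      add_mem' := fun {x y} hx hy => by
        have hx' : Matrix.single i0 i0 x ∈ D' := hx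
        have hy' : Matrix.single i0 i0 y ∈ D' := hy
        show Matrix.single i0 i0 (x + y) ∈ D'
        rw [Matrix.single_add]
        exact add_mem hx' hy'
      zero_mem' := by
        show Matrix.single i0 i0 (0 : K) ∈ D'
        rw [Matrix.single_zero]
        exact zero_mem _
      algebraMap_mem' := fun r => by
        show Matrix.single i0 i0 (algebraMap R K r) ∈ D'
        have hsm := Subalgebra.smul_mem D' hone r
        rwa [Matrix.smul_single, Algebra.smul_def, mul_one] at hsm }
  -- Λ is finitely generated as an R-module
  let φ : Matrix (Fin n) (Fin n) K →ₗ[R] K :=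
    { toFun := fun Y => Y i0 i0
      map_add' := fun _ _ => rfl
      map_smul' := fun _ _ => rfl }
  have hΛm : ((Subalgebra.toSubmodule D').map φ).FG := (hD'.1).map φ
  have hsub : Subalgebra.toSubmodule Λ ≤ (Subalgebra.toSubmodule D').map φ := by
    intro x hx
    exact ⟨Matrix.single i0 i0 x, hx, Matrix.single_apply_same i0 i0 x⟩
  have hnoe : IsNoetherian R ((Subalgebra.toSubmodule D').map φ) :=
    isNoetherian_of_fg_of_noetherian _ hΛm
  have hΛfg : (Subalgebra.toSubmodule Λ).FG := by
    have h1 : (Submodule.comap ((Subalgebra.toSubmodule D').map φ).subtype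
        (Subalgebra.toSubmodule Λ)).FG := IsNoetherian.noetherian _
    have h2 := h1.map ((Subalgebra.toSubmodule D').map φ).subtype
    rwa [Submodule.map_comap_subtype, inf_eq_right.mpr hsub] at h2
  have hint : IsIntegral R s := IsIntegral.of_mem_of_fg Λ hΛfg s (show s ∈ Λ from hM)
  obtain ⟨r, hr⟩ := IsIntegrallyClosed.isIntegral_iff.mp hint
  exact ⟨r, hr⟩

end Max
/-- Let `Δ = Δ_0 ∩ Δ_a` (a totally positive normalized) and suppose
`Δ ⊆ Δ_c`, `Δ ⊆ Δ_d`, and a maximal order contains `Δ_c ∩ Δ_d` iff it contains `Δ`. Then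
`(Δ_c, Δ_d) = (Δ_0, Δ_a)` or `(Δ_c, Δ_d) = (Δ_a, Δ_0)`. -/
theorem stmt5 (π : R) (hπ : Irreducible π) (n : ℕ) (hn : 1 ≤ n)
    (a : Fin n → ℤ) (ha0 : a ⟨0, hn⟩ = 0) (hmono : Monotone a)
    (c d : Fin n → ℤ)
    (hc : Delta R K π (0 : Fin n → ℤ) ∩ Delta R K π a ⊆ Delta R K π c)
    (hd : Delta R K π (0 : Fin n → ℤ) ∩ Delta R K π a ⊆ Delta R K π d)
    (h : ∀ D : Subalgebra R (Matrix (Fin n) (Fin n) K), IsMaximalOrder R K D →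
      (Delta R K π c ∩ Delta R K π d ⊆ (D : Set (Matrix (Fin n) (Fin n) K)) ↔
        Delta R K π (0 : Fin n → ℤ) ∩ Delta R K π a ⊆
          (D : Set (Matrix (Fin n) (Fin n) K)))) :
    (Delta R K π c = Delta R K π (0 : Fin n → ℤ) ∧ Delta R K π d = Delta R K π a) ∨
    (Delta R K π c = Delta R K π a ∧ Delta R K π d = Delta R K π (0 : Fin n → ℤ)) := by
  set i0 : Fin n := ⟨0, hn⟩ with hi0
  have hpos : ∀ i, 0 ≤ a i := fun i => by
    have := hmono (show i0 ≤ i from by simp [hi0, Fin.le_def])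
    omega
  -- use the hypothesis with the two maximal orders Δ_0 and Δ_a
  have h0 : Delta R K π c ∩ Delta R K π d ⊆ Delta R K π (0 : Fin n → ℤ) := by
    have := (h (DeltaAlg R K π hπ (0 : Fin n → ℤ)) (st5_maximal π hπ _ hn)).mpr
    rw [st5_coe_DeltaAlg] at this
    exact this Set.inter_subset_left
  have hA : Delta R K π c ∩ Delta R K π d ⊆ Delta R K π a := by
    have := (h (DeltaAlg R K π hπ a) (st5_maximal π hπ _ hn)).mpr
    rw [st5_coe_DeltaAlg] at this
    exact this Set.inter_subset_right
  -- translate everything into integers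
  have H1 := (st5_subset_pair_iff π hπ c d (0 : Fin n → ℤ)).mp h0
  have H2 := (st5_subset_pair_iff π hπ c d a).mp hA
  have H3 := (st5_subset_pair_iff π hπ (0 : Fin n → ℤ) a c).mp hc
  have H4 := (st5_subset_pair_iff π hπ (0 : Fin n → ℤ) a d).mp hd
  simp only [Pi.zero_apply, sub_zero, sub_self] at H1 H2 H3 H4
  have H : ∀ i j, min (c j - c i) (d j - d i) = min 0 (a j - a i) := by
    intro i j
    have h1 := H1 i j
    have h2 := H2 i j
    have h3 := H3 i j
    have h4 := H4 i j
    omega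
  have hmin : ∀ j, min (c j - c i0) (d j - d i0) = min 0 (a j) := fun j => by
    have := H i0 j; rw [ha0] at this; omega
  have hmax : ∀ j, min (c i0 - c j) (d i0 - d j) = min 0 (-(a j)) := fun j => by
    have := H j i0; rw [ha0] at this
    have := hpos j
    omega
  by_cases hall : ∀ j, c j - c i0 = 0
  · left
    have hdj : ∀ j, d j - d i0 = a j := fun j => by
      have h1 := hmin j
      have h2 := hmax j
      have h3 := hall j
      have h4 := hpos j
      omega
    constructor
    · exact st5_Delta_eq_of π hπ fun i j => by
        have := hall i; have := hall j; simp; omega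
    · exact st5_Delta_eq_of π hπ fun i j => by
        have := hdj i; have := hdj j; omega
  · right
    push_neg at hall
    obtain ⟨j0, hj0⟩ := hall
    have hj0' : c j0 - c i0 = a j0 ∧ d j0 - d i0 = 0 ∧ 0 < a j0 := by
      have h1 := hmin j0
      have h2 := hmax j0
      have h3 := hpos j0
      omega
    have hkey : ∀ j, c j - c i0 = a j ∧ d j - d i0 = 0 := fun j => by
      have h1 := hmin j
      have h2 := hmax j
      have h3 := hpos j
      have h4 := H j0 j
      have h5 := hj0'
      omega
    constructor
    · exact st5_Delta_eq_of π hπ fun i j => by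
        have := (hkey i).1; have := (hkey j).1; omega
    · exact st5_Delta_eq_of π hπ fun i j => by
        have := (hkey i).2; have := (hkey j).2; simp; omega
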